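/- Factorization formula in even rank: for n even and λ a partition with at most n parts, P_{ρ_{n−1}+λ}(x_1,...,x_n | t) = ∏_{1≤i<j≤n}(x_i + x_j) · s_λ(x_1,...,x_n | t). -/

import Mathlib

open Finset

/-- The product over pairs `i<j` of a symmetric function of `x (w i), x (w j)` is
independent of the permutation `w`. -/
lemma sym_pair_prod {F : Type*} [CommMonoid F] {n : ℕ} (x : Fin n → F)
    (w : Equiv.Perm (Fin n)) (f : F → F → F) (hf : ∀ a b, f a b = f b a) :
    ∏ p ∈ Finset.univ.filter (fun p : Fin n × Fin n => p.1 < p.2),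
        f (x (w p.1)) (x (w p.2))
      = ∏ p ∈ Finset.univ.filter (fun p : Fin n × Fin n => p.1 < p.2), f (x p.1) (x p.2) := by
  refine Finset.prod_bij'
    (fun p _ => if w p.1 < w p.2 then (w p.1, w p.2) else (w p.2, w p.1))
    (fun p _ => if w⁻¹ p.1 < w⁻¹ p.2 then (w⁻¹ p.1, w⁻¹ p.2) else (w⁻¹ p.2, w⁻¹ p.1))
    ?_ ?_ ?_ ?_ ?_
  · intro p hp
    simp only [mem_filter, mem_univ, true_and] at hp ⊢
    split_ifs with h
    · exact h
    · rcases lt_or_eq_of_le (not_lt.mp h) with h' | h'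
      · exact h'
      · exact absurd (w.injective h') hp.ne'
  · intro p hp
    simp only [mem_filter, mem_univ, true_and] at hp ⊢
    split_ifs with h
    · exact h
    · rcases lt_or_eq_of_le (not_lt.mp h) with h' | h'
      · exact h'
      · exact absurd (w⁻¹.injective h') hp.ne'
  · intro p hp
    simp only [mem_filter, mem_univ, true_and] at hp
    split_ifs with h <;> simp_all [Prod.ext_iff] <;> (try split_ifs with h2) <;>
      (try simp_all [Prod.ext_iff]) <;> omega
  · intro p hp
    simp only [mem_filter, mem_univ, true_and] at hp
    split_ifs with h <;> simp_all [Prod.ext_iff] <;> (try split_ifs with h2) <;>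
      (try simp_all [Prod.ext_iff]) <;> omega
  · intro p hp
    split_ifs with h
    · rfl
    · exact hf _ _

/-- Factorization formula in even rank: for `n` even and `λ` a partition with at most
`n` parts, `P_{ρ_{n-1}+λ}(x_1,…,x_n|t) = ∏_{i<j}(x_i+x_j) · s_λ(x_1,…,x_n|t)`.
Here `μ = ρ_{n-1}+λ` has `r = n` parts `μ_i = n-i+λ_i`, so Ivanov's formula reads
`P_μ = ∑_{w∈S_n} w[∏_i (x_i|t)^{μ_i} ∏_{i<j}(x_i+x_j)/(x_i-x_j)]`, and
`s_λ(x|t) = ∑_{w∈S_n} w[∏_i (x_i|t)^{λ_i+n-i} ∏_{i<j}(x_i-x_j)^{-1}]`, with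
`(x|t)^k = (x-t_1)⋯(x-t_k)`; we work in a field with the `x_i` pairwise distinct.
Indices are 0-based: `lam i` is `λ_{i+1}`, `t m` is `t_{m+1}`. -/
theorem stmt_5 {F : Type*} [Field F] (n : ℕ) (hn : Even n) (x : Fin n → F) (t : ℕ → F)
    (lam : ℕ → ℕ) (hlam : Antitone lam) (hx : Function.Injective x) :
    ∑ w : Equiv.Perm (Fin n),
        (∏ i : Fin n, ∏ m ∈ Finset.range ((n - 1 - (i : ℕ)) + lam (i : ℕ)), (x (w i) - t m))
          * ∏ p ∈ Finset.univ.filter (fun p : Fin n × Fin n => p.1 < p.2),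
              ((x (w p.1) + x (w p.2)) / (x (w p.1) - x (w p.2)))
      =
      (∏ p ∈ Finset.univ.filter (fun p : Fin n × Fin n => p.1 < p.2), (x p.1 + x p.2))
        * ∑ w : Equiv.Perm (Fin n),
            (∏ i : Fin n, ∏ m ∈ Finset.range (lam (i : ℕ) + (n - 1 - (i : ℕ))), (x (w i) - t m))
              * ∏ p ∈ Finset.univ.filter (fun p : Fin n × Fin n => p.1 < p.2),
                  (x (w p.1) - x (w p.2))⁻¹ := by
  rw [Finset.mul_sum]
  refine Finset.sum_congr rfl fun w _ => ?_
  have h1 : ∀ i : Fin n, (n - 1 - (i : ℕ)) + lam (i : ℕ) = lam (i : ℕ) + (n - 1 - (i : ℕ)) :=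
    fun i => Nat.add_comm _ _
  simp_rw [h1, div_eq_mul_inv, Finset.prod_mul_distrib]
  rw [sym_pair_prod x w (fun a b => a + b) (fun a b => add_comm a b)]
  ring
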